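/- Let s be a natural number, let M : Matrix (Fin s × G) (Fin s × G) R be a block matrix all of whose blocks are Hadamard matrices, with witnesses a p q : G → R satisfying M (p,i) (q,j) = a p q (i + j), and let N : Matrix (Fin s × G) (Fin s × G) R be a block matrix all of whose blocks are Hadamard matrices with eigenvalue zero (witnesses b p q : G → R with N (p,i) (q,j) = b p q (i + j) and ∑_{g ∈ G} b p q g = 0 for all p, q). Define M'' : Matrix (Fin s) (Fin s) R by M'' p q = ∑_{g ∈ G} a p q g. Then (Polynomial.aeval (M + N) (Matrix.charpoly M''))^2 = 0. -/

import Mathlib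

open Polynomial AddMonoidAlgebra

namespace HadTest

variable (k : ℕ) (R : Type*) [CommRing R] [CharP R 2]

abbrev Gk := Fin k → ZMod 2

noncomputable abbrev CC := AddMonoidAlgebra R (Gk k)

variable {k R}

lemma g_add_self (x : Gk k) : x + x = 0 := by
  funext i; exact CharTwo.add_self_eq_zero _

noncomputable def psi : CC k R →ₐ[R] R :=
  AddMonoidAlgebra.lift R R (Gk k) 1

lemma psi_single (g : Gk k) (r : R) : psi (AddMonoidAlgebra.single g r) = r := by
  simp [psi, AddMonoidAlgebra.lift_single]

lemma psi_apply (u : CC k R) : psi u = ∑ g : Gk k, u.coeff g := by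
  rw [psi, AddMonoidAlgebra.lift_apply]
  rw [Finsupp.sum_fintype]
  · simp
  · intro g; simp

end HadTest

namespace HadTest
set_option linter.unusedSectionVars false

variable {k : ℕ} {R : Type*} [CommRing R] [CharP R 2]

lemma charP_CC : CharP (CC k R) 2 := by
  have h : Function.Injective (algebraMap R (CC k R)) := by
    intro x y hxy
    have := congrArg psi hxy
    rwa [show (algebraMap R (CC k R)) x = AddMonoidAlgebra.single 0 x from rfl,
      show (algebraMap R (CC k R)) y = AddMonoidAlgebra.single 0 y from rfl,
      psi_single, psi_single] at this
  exact charP_of_injective_algebraMap h 2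

lemma pow_two_eq (u : CC k R) :
    u ^ 2 = AddMonoidAlgebra.single (0 : Gk k) ((psi u) ^ 2) := by
  haveI := charP_CC (k := k) (R := R)
  induction u using AddMonoidAlgebra.induction with
  | zero => simp
  | single_add g r f hg hr ih =>
    rw [add_pow_char, ih, AddMonoidAlgebra.single_pow, map_add, psi_single, add_pow_char,
      two_smul, g_add_self]
    simp [AddMonoidAlgebra.single_add]

lemma conv_apply (u v : CC k R) (x : Gk k) :
    (u * v).coeff x = ∑ g : Gk k, u.coeff g * v.coeff (g + x) := by
  have hemb : Function.Injective (fun g : Gk k => (g, g + x)) := by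
    intro g h hgh
    exact (Prod.mk.injEq _ _ _ _ ▸ hgh).1
  rw [AddMonoidAlgebra.coeff_mul_antidiag u v x
    (Finset.univ.map ⟨fun g => (g, g + x), hemb⟩)]
  · rw [Finset.sum_map]
    rfl
  · intro p
    simp only [Finset.mem_map, Finset.mem_univ, true_and, Function.Embedding.coeFn_mk]
    constructor
    · rintro ⟨g, rfl⟩
      rw [← add_assoc, g_add_self, zero_add]
    · intro hp
      refine ⟨p.1, ?_⟩
      have : p.2 = p.1 + x := by
        rw [← hp, ← add_assoc, g_add_self, zero_add]
      rw [← this]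

/-- The embedding of the group algebra into `G × G` matrices. -/
noncomputable def theta0 : CC k R →ₐ[R] Matrix (Gk k) (Gk k) R where
  toFun u := Matrix.of fun i j => u.coeff (i + j)
  map_one' := by
    ext i j
    show (1 : CC k R).coeff (i + j) = (1 : Matrix (Gk k) (Gk k) R) i j
    rw [AddMonoidAlgebra.one_def, Matrix.one_apply]
    rw [AddMonoidAlgebra.coeff_single, Finsupp.single_apply]
    congr 1
    simp only [eq_iff_iff]
    constructor
    · intro h
      have := congrArg (i + ·) h.symm
      simpa [← add_assoc, g_add_self] using this.symm
    · rintro rfl; exact (g_add_self i).symm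
  map_mul' u v := by
    ext i j
    show (u * v).coeff (i + j) = ((Matrix.of fun i j => u.coeff (i + j)) * (Matrix.of fun i j => v.coeff (i + j))) i j
    rw [conv_apply, Matrix.mul_apply]
    refine Fintype.sum_equiv (Equiv.addLeft i) _ _ fun g => ?_
    simp only [Equiv.coe_addLeft, Matrix.of_apply]
    congr 2
    · rw [← add_assoc, g_add_self, zero_add]
    · rw [add_left_comm, add_assoc]
  map_zero' := by ext i j; simp
  map_add' u v := by
    ext i j
    show (u + v).coeff (i + j) = u.coeff (i + j) + v.coeff (i + j)
    exact Finsupp.add_apply u.coeff v.coeff _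
  commutes' r := by
    ext i j
    show ((algebraMap R (CC k R)) r).coeff (i + j) = (algebraMap R (Matrix (Gk k) (Gk k) R)) r i j
    rw [Matrix.algebraMap_eq_diagonal]
    rw [show ((algebraMap R (CC k R)) r) = AddMonoidAlgebra.single 0 r from rfl]
    rw [AddMonoidAlgebra.coeff_single, Finsupp.single_apply, Matrix.diagonal_apply, Pi.algebraMap_apply]
    simp only [Algebra.algebraMap_self_apply]
    congr 1
    simp only [eq_iff_iff]
    constructor
    · intro h
      have := congrArg (i + ·) h.symm
      simpa [← add_assoc, g_add_self] using this.symm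
    · rintro rfl; exact (g_add_self i).symm

variable {s : ℕ}

noncomputable def theta :
    Matrix (Fin s) (Fin s) (CC k R) →ₐ[R] Matrix (Fin s × Gk k) (Fin s × Gk k) R :=
  (Matrix.compAlgEquiv (Fin s) (Gk k) R R).toAlgHom.comp (AlgHom.mapMatrix theta0)

lemma theta_apply (A : Matrix (Fin s) (Fin s) (CC k R)) (p q : Fin s) (i j : Gk k) :
    theta A (p, i) (q, j) = (A p q).coeff (i + j) := by
  simp [theta, Matrix.compAlgEquiv_apply, Matrix.comp_apply, theta0]

lemma main_lemma (T : Matrix (Fin s) (Fin s) (CC k R)) :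
    (Polynomial.aeval T ((T.map psi).charpoly)) ^ 2 = 0 := by
  haveI := charP_CC (k := k) (R := R)
  haveI : Fact (Nat.Prime 2) := ⟨Nat.prime_two⟩
  have hP : (T.map psi).charpoly = T.charpoly.map (psi.toRingHom : CC k R →+* R) :=
    Matrix.charpoly_map T psi.toRingHom
  set P : R[X] := (T.map psi).charpoly with hPdef
  set D : (CC k R)[X] := P.map (algebraMap R (CC k R)) - T.charpoly with hDdef
  have h1 : Polynomial.aeval T P = Polynomial.aeval T D := by
    rw [hDdef, map_sub, Matrix.aeval_self_charpoly, sub_zero, Polynomial.aeval_map_algebraMap]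
  have hcoeff : ∀ n, psi (D.coeff n) = 0 := by
    intro n
    rw [hDdef, Polynomial.coeff_sub, map_sub, Polynomial.coeff_map, AlgHom.commutes]
    have : psi (T.charpoly.coeff n) = (T.charpoly.map (psi.toRingHom : CC k R →+* R)).coeff n :=
      (Polynomial.coeff_map _ _).symm
    rw [this, ← hP]
    simp
  have hsq : ∀ n, (D.coeff n) ^ 2 = 0 := fun n => by
    rw [pow_two_eq, hcoeff n]
    simp
  have hD2 : D ^ 2 = 0 := by
    have hf : D ^ 2 = frobenius ((CC k R)[X]) 2 D := (frobenius_def 2 D).symm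
    rw [hf, Polynomial.as_sum_support D, map_sum]
    refine Finset.sum_eq_zero fun n hn => ?_
    rw [frobenius_def 2 _, Polynomial.monomial_pow, hsq, Polynomial.monomial_zero_right]
  rw [h1, ← map_pow, hD2, map_zero]

end HadTest


/-- If `M` is an `s × s` block matrix with Hadamard blocks (with block eigenvalue matrix `M''`),
and `N` is an `s × s` block matrix with Hadamard blocks all of eigenvalue zero, then evaluating
the characteristic polynomial of `M''` at `M + N` gives a square-zero matrix. -/
theorem charpoly_eval_add_ker_sq_eq_zero (k s : ℕ) (R : Type*) [CommRing R] [CharP R 2]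
    (M N : Matrix (Fin s × (Fin k → ZMod 2)) (Fin s × (Fin k → ZMod 2)) R)
    (a b : Fin s → Fin s → (Fin k → ZMod 2) → R)
    (hM : ∀ p q (i j : Fin k → ZMod 2), M (p, i) (q, j) = a p q (i + j))
    (hN : ∀ p q (i j : Fin k → ZMod 2), N (p, i) (q, j) = b p q (i + j))
    (hb : ∀ p q, ∑ g, b p q g = 0) :
    (Polynomial.aeval (M + N) (Matrix.charpoly (Matrix.of fun p q => ∑ g, a p q g))) ^ 2 = 0 := by
  classical
  set T : Matrix (Fin s) (Fin s) (HadTest.CC k R) :=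
    Matrix.of (fun p q => AddMonoidAlgebra.ofCoeff (Finsupp.equivFunOnFinite.symm (a p q + b p q))) with hT
  have hTheta : HadTest.theta T = M + N := by
    ext ⟨p, i⟩ ⟨q, j⟩
    rw [HadTest.theta_apply, Matrix.add_apply, hM, hN]
    simp [hT]
  have hmap : T.map HadTest.psi = Matrix.of (fun p q => ∑ g, a p q g) := by
    ext p q
    rw [Matrix.map_apply, HadTest.psi_apply]
    simp only [hT, Matrix.of_apply, AddMonoidAlgebra.coeff_ofCoeff, Finsupp.coe_equivFunOnFinite_symm, Pi.add_apply]
    rw [Finset.sum_add_distrib, hb, add_zero]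
  rw [← hTheta, ← hmap, Polynomial.aeval_algHom_apply, ← map_pow, HadTest.main_lemma, map_zero]
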